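/- arXiv:1403.7313 — 4 statements merged into one kernel-verified Lean document; each statement's English description precedes it below -/
import Mathlib

section
/- If f is analytic on the unit disk D with diameter of image Diam f(D) = sup_{z,w in D} |f(z)-f(w)| finite, then for every positive integer n, |f^(n)(0)|/n! ≤ (1/2)·Diam f(D). -/
open Metric Filter Topology

private lemma poukka_aux (f : ℂ → ℂ)
    (hf : DifferentiableOn ℂ f (Metric.ball (0:ℂ) 1))
    (hbdd : Bornology.IsBounded (f '' Metric.ball (0:ℂ) 1))
    (n : ℕ) (hn : 0 < n) (r : NNReal) (hr0 : 0 < r) (hr1 : (r:ℝ) < 1) :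
    ‖iteratedDeriv n f 0‖ / (n.factorial : ℝ) ≤
      (1/2) * Metric.diam (f '' Metric.ball (0:ℂ) 1) * ((r:ℝ)⁻¹)^n := by
  set D := Metric.diam (f '' Metric.ball (0:ℂ) 1) with hD
  set ω : ℂ := Complex.exp ((Real.pi / n : ℝ) * Complex.I) with hω
  have hωabs : ‖ω‖ = 1 := Complex.norm_exp_ofReal_mul_I _
  have hωn : ω ^ n = -1 := by
    rw [hω, ← Complex.exp_nat_mul]
    have : (n : ℂ) * ((Real.pi / n : ℝ) * Complex.I) = Real.pi * Complex.I := by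
      push_cast
      field_simp
      exact div_self (Nat.cast_ne_zero.mpr hn.ne')
    rw [this, Complex.exp_pi_mul_I]
  have hsub : Metric.closedBall (0:ℂ) r ⊆ Metric.ball (0:ℂ) 1 :=
    closedBall_subset_ball hr1
  have hfd : DifferentiableOn ℂ f (Metric.closedBall (0:ℂ) r) := hf.mono hsub
  have hball : ∀ z ∈ Metric.closedBall (0:ℂ) (r:ℝ), ω * z ∈ Metric.closedBall (0:ℂ) (r:ℝ) := by
    intro z hz
    simp only [Metric.mem_closedBall, Complex.dist_eq, sub_zero] at hz ⊢
    rw [norm_mul, hωabs, one_mul]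
    exact hz
  have hgd : DifferentiableOn ℂ (fun z => f (ω * z)) (Metric.closedBall (0:ℂ) r) := by
    exact hfd.comp (((differentiable_const ω).mul differentiable_id).differentiableOn)
      (fun z hz => hball z hz)
  have hp : HasFPowerSeriesOnBall f (cauchyPowerSeries f 0 r) 0 r :=
    hfd.hasFPowerSeriesOnBall hr0
  set p := cauchyPowerSeries f 0 r with hpdef
  set q : FormalMultilinearSeries ℂ ℂ ℂ := fun k => ω ^ k • p k with hqdef
  have hqnorm : ∀ k, ‖q k‖ = ‖p k‖ := by
    intro k
    show ‖ω ^ k • p k‖ = ‖p k‖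
    rw [norm_smul (ω ^ k) (p k), norm_pow, hωabs, one_pow, one_mul]
  have hq : HasFPowerSeriesOnBall (fun z => f (ω * z)) q 0 r := by
    refine ⟨?_, hp.r_pos, ?_⟩
    · refine q.le_radius_of_bound ((2 * Real.pi)⁻¹ *
        ∫ θ : ℝ in (0)..2 * Real.pi, ‖f (circleMap 0 r θ)‖) fun k => ?_
      have h1 := norm_cauchyPowerSeries_le f 0 r k
      rw [← hpdef] at h1
      have h2 : ‖q k‖ * (r:ℝ)^k ≤ (((2 * Real.pi)⁻¹ *
          ∫ θ : ℝ in (0)..2 * Real.pi, ‖f (circleMap 0 r θ)‖) * |(r:ℝ)|⁻¹ ^ k) * (r:ℝ)^k := by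
        rw [hqnorm]
        exact mul_le_mul_of_nonneg_right h1 (by positivity)
      refine h2.trans ?_
      rw [abs_of_nonneg r.coe_nonneg, mul_assoc, ← mul_pow, inv_mul_cancel₀ (by exact_mod_cast hr0.ne'), one_pow, mul_one]
    · intro y hy
      have hy' : ω * y ∈ Metric.eball (0:ℂ) r := by
        rw [EMetric.mem_ball, edist_zero_right] at hy ⊢
        rwa [show ‖ω * y‖ₑ = ‖y‖ₑ by
          rw [enorm_mul, ← ofReal_norm_eq_enorm ω, hωabs, ENNReal.ofReal_one, one_mul]]
      have := hp.hasSum hy'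
      rw [zero_add] at this
      have heq : ∀ k : ℕ, (q k fun _ => y) = p k fun _ => ω * y := by
        intro k
        have := (p k).map_smul_univ (fun _ : Fin k => ω) (fun _ : Fin k => y)
        simp only [smul_eq_mul, Finset.prod_const, Finset.card_univ, Fintype.card_fin] at this
        rw [hqdef]
        simp only [ContinuousMultilinearMap.smul_apply, smul_eq_mul]
        rw [← this]
      rw [zero_add]
      simpa only [heq] using this
  -- coefficient identity
  have hhd : DifferentiableOn ℂ (f - fun z => f (ω * z)) (Metric.closedBall (0:ℂ) r) :=
    hfd.sub hgd
  have hc : HasFPowerSeriesOnBall (f - fun z => f (ω * z))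
      (cauchyPowerSeries (f - fun z => f (ω * z)) 0 r) 0 r := hhd.hasFPowerSeriesOnBall hr0
  have hh : HasFPowerSeriesOnBall (f - fun z => f (ω * z)) (p - q) 0 r := hp.sub hq
  set a : ℂ := p n fun _ => (1:ℂ) with ha
  set c : ℂ := cauchyPowerSeries (f - fun z => f (ω * z)) 0 r n fun _ => (1:ℂ) with hcdef
  have e1 : (n.factorial : ℂ) * ((2:ℂ) * a) = (n.factorial : ℂ) * c := by
    have h1 := hh.factorial_smul (1:ℂ) n
    have h2 := hc.factorial_smul (1:ℂ) n
    rw [← h2] at h1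
    have h3 : ((p - q) n fun _ => (1:ℂ)) = (2:ℂ) * a := by
      show ((p n - q n) fun _ => (1:ℂ)) = (2:ℂ) * a
      rw [ContinuousMultilinearMap.sub_apply]
      have : (q n fun _ => (1:ℂ)) = ω ^ n • a := by
        show ((ω ^ n • p n) fun _ => (1:ℂ)) = ω ^ n • a
        rw [ContinuousMultilinearMap.smul_apply, ha]
      rw [this, hωn, ← ha]
      ring_nf
    rw [h3] at h1
    simpa [nsmul_eq_mul, hcdef] using h1
  have e2 : (2:ℂ) * a = c :=
    mul_left_cancel₀ (Nat.cast_ne_zero.mpr n.factorial_ne_zero) e1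
  -- norm bound on c
  have hDnonneg : 0 ≤ D := diam_nonneg
  have hnormbound : ∀ θ : ℝ, ‖(f - fun z => f (ω * z)) (circleMap 0 r θ)‖ ≤ D := by
    intro θ
    have hz : circleMap 0 r θ ∈ Metric.ball (0:ℂ) 1 := by
      simp only [Metric.mem_ball, Complex.dist_eq, sub_zero, norm_circleMap_zero]
      rw [abs_of_nonneg r.coe_nonneg]
      exact hr1
    have hz2 : ω * circleMap 0 r θ ∈ Metric.ball (0:ℂ) 1 := by
      simp only [Metric.mem_ball, Complex.dist_eq, sub_zero] at hz ⊢
      rw [norm_mul, hωabs, one_mul]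
      exact hz
    have := Metric.dist_le_diam_of_mem hbdd
      (Set.mem_image_of_mem f hz) (Set.mem_image_of_mem f hz2)
    simpa [Pi.sub_apply, dist_eq_norm] using this
  have hcont : Continuous fun θ : ℝ => ‖(f - fun z => f (ω * z)) (circleMap 0 r θ)‖ := by
    have h1 : ContinuousOn (f - fun z => f (ω * z)) (Metric.closedBall (0:ℂ) r) :=
      hhd.continuousOn
    refine (h1.comp_continuous (continuous_circleMap 0 r) fun θ => ?_).norm
    simp only [Metric.mem_closedBall, Complex.dist_eq, sub_zero, norm_circleMap_zero]
    rw [abs_of_nonneg r.coe_nonneg]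
  have hint : (∫ θ : ℝ in (0)..2 * Real.pi, ‖(f - fun z => f (ω * z)) (circleMap 0 r θ)‖)
      ≤ 2 * Real.pi * D := by
    have := intervalIntegral.integral_mono_on (μ := MeasureTheory.volume) (a := 0) (b := 2 * Real.pi)
      (f := fun θ : ℝ => ‖(f - fun z => f (ω * z)) (circleMap 0 r θ)‖)
      (g := fun _ : ℝ => D) Real.two_pi_pos.le
      (hcont.intervalIntegrable _ _) (intervalIntegrable_const)
      (fun θ _ => hnormbound θ)
    simpa using this
  have hcbound : ‖c‖ ≤ D * ((r:ℝ)⁻¹)^n := by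
    have h1 : ‖c‖ ≤ ‖cauchyPowerSeries (f - fun z => f (ω * z)) 0 r n‖ := by
      have h0 := (cauchyPowerSeries (f - fun z => f (ω * z)) 0 r n).le_opNorm fun _ => (1:ℂ)
      simp only [norm_one, Finset.prod_const, one_pow, mul_one] at h0
      exact h0
    refine h1.trans ?_
    have h2 := norm_cauchyPowerSeries_le (f - fun z => f (ω * z)) 0 r n
    refine h2.trans ?_
    rw [abs_of_nonneg r.coe_nonneg]
    have h3 : (2 * Real.pi)⁻¹ * (∫ θ : ℝ in (0)..2 * Real.pi,
        ‖(f - fun z => f (ω * z)) (circleMap 0 r θ)‖) ≤ D := by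
      rw [inv_mul_le_iff₀ (by positivity)]
      linarith [hint]
    exact mul_le_mul_of_nonneg_right h3 (by positivity)
  -- conclude
  have e3 : ‖iteratedDeriv n f 0‖ = (n.factorial : ℝ) * ‖a‖ := by
    have h1 := hp.factorial_smul (1:ℂ) n
    rw [← ha] at h1
    have h2 : iteratedDeriv n f 0 = (n.factorial : ℂ) * a := by
      rw [iteratedDeriv_eq_iteratedFDeriv, ← h1, nsmul_eq_mul]
    rw [h2, norm_mul]
    simp
  have e4 : (2:ℝ) * ‖a‖ ≤ D * ((r:ℝ)⁻¹)^n := by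
    calc (2:ℝ) * ‖a‖ = ‖(2:ℂ) * a‖ := by rw [norm_mul]; simp
    _ = ‖c‖ := by rw [e2]
    _ ≤ D * ((r:ℝ)⁻¹)^n := hcbound
  have hfac : (0:ℝ) < n.factorial := by exact_mod_cast n.factorial_pos
  rw [e3, mul_comm, mul_div_assoc, div_self hfac.ne', mul_one]
  linarith

theorem poukka_diam_bound (f : ℂ → ℂ)
    (hf : DifferentiableOn ℂ f (Metric.ball (0:ℂ) 1))
    (hbdd : Bornology.IsBounded (f '' Metric.ball (0:ℂ) 1)) :
    ∀ n : ℕ, 0 < n →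
      ‖iteratedDeriv n f 0‖ / (n.factorial : ℝ) ≤
        (1/2) * Metric.diam (f '' Metric.ball (0:ℂ) 1) := by
  intro n hn
  set D := Metric.diam (f '' Metric.ball (0:ℂ) 1) with hD
  have tend : Tendsto (fun x : ℝ => (1/2) * D * (x⁻¹)^n) (𝓝[<] (1:ℝ))
      (𝓝 ((1/2) * D * ((1:ℝ)⁻¹)^n)) := by
    apply Tendsto.mono_left _ nhdsWithin_le_nhds
    exact (continuousAt_const.mul ((continuousAt_id.inv₀ (by norm_num)).pow n))
  have hev : ∀ᶠ x in 𝓝[<] (1:ℝ),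
      ‖iteratedDeriv n f 0‖ / (n.factorial : ℝ) ≤ (1/2) * D * (x⁻¹)^n := by
    filter_upwards [Ioo_mem_nhdsLT_of_mem
      (Set.mem_Ioc.mpr ⟨(zero_lt_one : (0:ℝ) < 1), le_refl 1⟩)] with x hx
    have h0 : (0:ℝ) < x := hx.1
    have h1 : (x.toNNReal : ℝ) = x := Real.coe_toNNReal x h0.le
    have := poukka_aux f hf hbdd n hn x.toNNReal (Real.toNNReal_pos.mpr h0)
      (by rw [h1]; exact hx.2)
    rwa [h1] at this
  have := ge_of_tendsto tend hev
  simpa using this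
end

section
/- Hadamard's three circles theorem: if f is holomorphic on the annulus {r₁ < |z| < r₂} and continuous on its closure, and M(r) denotes the maximum of |f| on the circle |z| = r, then for r₁ ≤ r ≤ r₂: M(r)^{log(r₂/r₁)} ≤ M(r₁)^{log(r₂/r)} · M(r₂)^{log(r/r₁)}. -/
set_option maxHeartbeats 1000000

open Complex HadamardThreeLines in
/-- Key step: the multiplicative convexity of `M`. -/
theorem hadamard_key (r₁ r₂ : ℝ) (h₁ : 0 < r₁) (h₁₂ : r₁ < r₂)
    (f : ℂ → ℂ)
    (hf : DifferentiableOn ℂ f {z : ℂ | r₁ < ‖z‖ ∧ ‖z‖ < r₂})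
    (hc : ContinuousOn f {z : ℂ | r₁ ≤ ‖z‖ ∧ ‖z‖ ≤ r₂})
    (M : ℝ → ℝ)
    (hM : ∀ r ∈ Set.Icc r₁ r₂,
      IsGreatest ((fun z => ‖f z‖) '' Metric.sphere (0:ℂ) r) (M r))
    (r : ℝ) (hr : r ∈ Set.Icc r₁ r₂) :
    M r ≤ M r₁ ^ (1 - (Real.log r - Real.log r₁) / (Real.log r₂ - Real.log r₁)) *
      M r₂ ^ ((Real.log r - Real.log r₁) / (Real.log r₂ - Real.log r₁)) := by
  have h₂ : (0:ℝ) < r₂ := h₁.trans h₁₂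
  have hrpos : 0 < r := lt_of_lt_of_le h₁ hr.1
  set l₁ := Real.log r₁
  set l₂ := Real.log r₂
  have hd : 0 < l₂ - l₁ := sub_pos.mpr (Real.log_lt_log h₁ h₁₂)
  set t := (Real.log r - l₁) / (l₂ - l₁) with ht
  -- the exponential map
  set φ : ℂ → ℂ := fun z => Complex.exp ((l₁ : ℂ) + z * ((l₂ - l₁ : ℝ) : ℂ)) with hφ
  have habs : ∀ z : ℂ, ‖φ z‖ = Real.exp (l₁ + z.re * (l₂ - l₁)) := by
    intro z
    simp [hφ, Complex.norm_exp]
  have hmaps_closed : ∀ z : ℂ, z.re ∈ Set.Icc (0:ℝ) 1 →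
      r₁ ≤ ‖φ z‖ ∧ ‖φ z‖ ≤ r₂ := by
    intro z hz
    rw [habs]
    constructor
    · rw [← Real.exp_log h₁]
      apply Real.exp_le_exp.mpr
      nlinarith [hz.1, hz.2]
    · rw [← Real.exp_log h₂]
      apply Real.exp_le_exp.mpr
      nlinarith [hz.1, hz.2]
  have hmaps_open : ∀ z : ℂ, z.re ∈ Set.Ioo (0:ℝ) 1 →
      r₁ < ‖φ z‖ ∧ ‖φ z‖ < r₂ := by
    intro z hz
    rw [habs]
    constructor
    · rw [← Real.exp_log h₁]
      apply Real.exp_lt_exp.mpr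
      nlinarith [hz.1, hz.2]
    · rw [← Real.exp_log h₂]
      apply Real.exp_lt_exp.mpr
      nlinarith [hz.1, hz.2]
  have hφdiff : Differentiable ℂ φ := by
    apply Complex.differentiable_exp.comp
    exact (differentiable_const _).add (differentiable_id.mul (differentiable_const _))
  set g : ℂ → ℂ := fun z => f (φ z) with hg
  -- differentiability of g
  have hgd : DiffContOnCl ℂ g (verticalStrip 0 1) := by
    constructor
    · apply DifferentiableOn.comp hf hφdiff.differentiableOn
      intro z hz
      exact hmaps_open z hz
    · rw [verticalStrip, Complex.closure_preimage_re, closure_Ioo zero_ne_one]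
      apply ContinuousOn.comp hc hφdiff.continuous.continuousOn
      intro z hz
      exact hmaps_closed z hz
  -- boundedness
  have hcomp : IsCompact {z : ℂ | r₁ ≤ ‖z‖ ∧ ‖z‖ ≤ r₂} := by
    have : {z : ℂ | r₁ ≤ ‖z‖ ∧ ‖z‖ ≤ r₂} =
        Metric.closedBall (0:ℂ) r₂ ∩ (Metric.ball (0:ℂ) r₁)ᶜ := by
      ext z
      simp [Metric.mem_closedBall, Metric.mem_ball, Complex.dist_eq, and_comm, not_lt]
    rw [this]
    exact (isCompact_closedBall _ _).inter_right (Metric.isOpen_ball.isClosed_compl)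
  have hB : BddAbove ((norm ∘ g) '' (verticalClosedStrip 0 1)) := by
    obtain ⟨C, hC⟩ := (hcomp.image_of_continuousOn hc).isBounded.exists_norm_le
    refine ⟨C, ?_⟩
    rintro x ⟨z, hz, rfl⟩
    have := hC (f (φ z)) ⟨φ z, hmaps_closed z hz, rfl⟩
    simpa [hg] using this
  -- edge bounds
  have hMnonneg : ∀ s ∈ Set.Icc r₁ r₂, 0 ≤ M s := by
    intro s hs
    obtain ⟨⟨w, hw, hws⟩, -⟩ := hM s hs
    rw [← hws]; positivity
  have hedge : ∀ (s : ℝ) (hs : s ∈ Set.Icc r₁ r₂) (c : ℝ) (z : ℂ),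
      z.re = c → Real.exp (l₁ + c * (l₂ - l₁)) = s → ‖g z‖ ≤ M s := by
    intro s hs c z hzc hcs
    apply (hM s hs).2
    refine ⟨φ z, ?_, rfl⟩
    simp only [Metric.mem_sphere, Complex.dist_eq, sub_zero]
    rw [habs, hzc, hcs]
  have key : ∀ z : ℂ, z ∈ verticalClosedStrip 0 1 →
      ‖g z‖ ≤ M r₁ ^ (1 - z.re) * M r₂ ^ z.re := by
    intro z hz
    apply norm_le_interp_of_mem_verticalClosedStrip₀₁' g hz hgd hB
    · intro w hw
      apply hedge r₁ ⟨le_refl _, h₁₂.le⟩ 0 w hw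
      simp [Real.exp_log h₁]
      exact Real.exp_log h₁
    · intro w hw
      apply hedge r₂ ⟨h₁₂.le, le_refl _⟩ 1 w hw
      simp [Real.exp_log h₂]
      exact Real.exp_log h₂
  -- now take the sup over the sphere of radius r
  have htmem : t ∈ Set.Icc (0:ℝ) 1 := by
    constructor
    · apply div_nonneg _ hd.le
      exact sub_nonneg.mpr (Real.log_le_log h₁ hr.1)
    · rw [div_le_one hd]
      have := Real.log_le_log hrpos hr.2
      linarith
  obtain ⟨⟨w, hw, hwM⟩, -⟩ := hM r hr
  have hwne : w ≠ 0 := by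
    intro h
    rw [Metric.mem_sphere, h] at hw
    simp at hw
    exact hrpos.ne' hw.symm
  set ζ := Complex.log w with hζdef
  have hζ : Complex.exp ζ = w := Complex.exp_log hwne
  have hζre : ζ.re = Real.log r := by
    have : ‖w‖ = r := by simpa [Complex.dist_eq] using hw
    rw [← hζ, Complex.norm_exp] at this
    rw [← Real.log_exp ζ.re, this]
  set z : ℂ := (ζ - (l₁:ℂ)) / ((l₂ - l₁ : ℝ) : ℂ) with hzdef
  have hdne : ((l₂ - l₁ : ℝ) : ℂ) ≠ 0 := by
    simp only [ne_eq, Complex.ofReal_eq_zero]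
    exact hd.ne'
  have hφz : φ z = w := by
    have hzd : (l₁:ℂ) + z * ((l₂ - l₁ : ℝ):ℂ) = ζ := by
      rw [hzdef, div_mul_cancel₀ _ hdne]; ring
    simp only [hφ]
    rw [hzd, hζ]
  have hzre : z.re = t := by
    rw [hzdef, Complex.div_ofReal_re, ht]
    simp [hζre]
  have := key z (by rw [verticalClosedStrip, Set.mem_preimage, hzre]; exact htmem)
  rw [hzre] at this
  calc M r = ‖f w‖ := hwM.symm
    _ = ‖g z‖ := by rw [hg]; simp [hφz]
    _ ≤ M r₁ ^ (1 - t) * M r₂ ^ t := this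

/-- Hadamard's three circles theorem. -/
theorem hadamard_three_circles (r₁ r₂ : ℝ) (h₁ : 0 < r₁) (h₁₂ : r₁ < r₂)
    (f : ℂ → ℂ)
    (hf : DifferentiableOn ℂ f {z : ℂ | r₁ < ‖z‖ ∧ ‖z‖ < r₂})
    (hc : ContinuousOn f {z : ℂ | r₁ ≤ ‖z‖ ∧ ‖z‖ ≤ r₂})
    (M : ℝ → ℝ)
    (hM : ∀ r ∈ Set.Icc r₁ r₂,
      IsGreatest ((fun z => ‖f z‖) '' Metric.sphere (0:ℂ) r) (M r)) :
    ∀ r ∈ Set.Icc r₁ r₂,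
      M r ^ Real.log (r₂ / r₁) ≤
        M r₁ ^ Real.log (r₂ / r) * M r₂ ^ Real.log (r / r₁) := by
  intro r hr
  have h₂ : (0:ℝ) < r₂ := h₁.trans h₁₂
  have hrpos : 0 < r := lt_of_lt_of_le h₁ hr.1
  have hd : 0 < Real.log r₂ - Real.log r₁ := sub_pos.mpr (Real.log_lt_log h₁ h₁₂)
  set L := Real.log r₂ - Real.log r₁ with hL
  set t := (Real.log r - Real.log r₁) / L with ht
  have hMnonneg : ∀ s ∈ Set.Icc r₁ r₂, 0 ≤ M s := by
    intro s hs
    obtain ⟨⟨w, hw, hws⟩, -⟩ := hM s hs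
    rw [← hws]; positivity
  have key := hadamard_key r₁ r₂ h₁ h₁₂ f hf hc M hM r hr
  have hlog1 : Real.log (r₂ / r₁) = L := by rw [Real.log_div h₂.ne' h₁.ne']
  have hlog2 : Real.log (r₂ / r) = L * (1 - t) := by
    rw [Real.log_div h₂.ne' hrpos.ne', ht, hL]
    field_simp [show Real.log r₂ - Real.log r₁ ≠ 0 from hd.ne']
    ring
  have hlog3 : Real.log (r / r₁) = L * t := by
    rw [Real.log_div hrpos.ne' h₁.ne', ht, hL]
    field_simp [show Real.log r₂ - Real.log r₁ ≠ 0 from hd.ne']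
  rw [hlog1, hlog2, hlog3]
  have hMr := hMnonneg r hr
  have hM1 := hMnonneg r₁ ⟨le_refl _, h₁₂.le⟩
  have hM2 := hMnonneg r₂ ⟨h₁₂.le, le_refl _⟩
  calc M r ^ L ≤ (M r₁ ^ (1 - t) * M r₂ ^ t) ^ L := by
        apply Real.rpow_le_rpow hMr key hd.le
    _ = M r₁ ^ (L * (1 - t)) * M r₂ ^ (L * t) := by
        rw [Real.mul_rpow (Real.rpow_nonneg hM1 _) (Real.rpow_nonneg hM2 _),
          ← Real.rpow_mul hM1, ← Real.rpow_mul hM2]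
        ring_nf
end

section
/- Distance-ratio metric contraction for polyharmonic mappings: Let F(z) = Σ_{n=1}^p |z|^{2(n-1)} Σ_j (a_{n,j}z^j + conj(b_{n,j})conj(z)^j) be polyharmonic on the unit disk, and suppose there exists M > 0 with F(D) ⊂ D_M and Σ_{n=1}^p Σ_{j=1}^∞ (|a_{n,j}| + |b_{n,j}|) ≤ M. Then for all z, w ∈ D: j_{D_M}(F(z), F(w)) ≤ j_D(z, w). -/
open Metric Finset

/-- The distance ratio metric of the disk of radius `R` centered at the origin. -/
noncomputable def jBall (R : ℝ) (z w : ℂ) : ℝ :=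
  Real.log (1 + dist z w / min (R - ‖z‖) (R - ‖w‖))

private lemma abs_pow_sub_pow_le_aux (x y : ℂ) (r : ℝ) (hx : ‖x‖ ≤ r)
    (hy : ‖y‖ ≤ r) (n : ℕ) :
    ‖x ^ n - y ^ n‖ ≤ n * r ^ (n - 1) * ‖x - y‖ := by
  have hr : 0 ≤ r := (norm_nonneg x).trans hx
  rw [← geom_sum₂_mul x y n, norm_mul]
  have h1 : ‖∑ i ∈ range n, x ^ i * y ^ (n - 1 - i)‖ ≤ n * r ^ (n - 1) := by
    refine (norm_sum_le _ _).trans ?_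
    have hb : ∀ i ∈ range n, ‖x ^ i * y ^ (n - 1 - i)‖ ≤ r ^ (n - 1) := by
      intro i hi
      rw [norm_mul, norm_pow, norm_pow]
      calc ‖x‖ ^ i * ‖y‖ ^ (n - 1 - i)
          ≤ r ^ i * r ^ (n - 1 - i) := by
            exact mul_le_mul (pow_le_pow_left₀ (norm_nonneg x) hx i)
              (pow_le_pow_left₀ (norm_nonneg y) hy _)
              (pow_nonneg (norm_nonneg y) _) (pow_nonneg hr _)
        _ = r ^ (n - 1) := by
            rw [← pow_add]; congr 1
            have := Finset.mem_range.mp hi; omega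
    calc ∑ i ∈ range n, ‖x ^ i * y ^ (n - 1 - i)‖
        ≤ ∑ _i ∈ range n, r ^ (n - 1) := Finset.sum_le_sum hb
      _ = n * r ^ (n - 1) := by simp [mul_comm]
  exact mul_le_mul_of_nonneg_right h1 (norm_nonneg _)

private lemma aux_k_le (r : ℝ) (hr0 : 0 ≤ r) (hr1 : r ≤ 1) (k : ℕ) :
    ((k : ℝ) + 1) * r ^ k ≤ ∑ i ∈ range (k + 1), r ^ i := by
  calc ((k : ℝ) + 1) * r ^ k = ∑ _i ∈ range (k + 1), r ^ k := by
        rw [Finset.sum_const, Finset.card_range, nsmul_eq_mul]; push_cast; ring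
    _ ≤ ∑ i ∈ range (k + 1), r ^ i := by
        refine Finset.sum_le_sum fun i hi => ?_
        exact pow_le_pow_of_le_one hr0 hr1 (by have := Finset.mem_range.mp hi; omega)

private lemma aux_geom (r : ℝ) (hr0 : 0 ≤ r) (hr1 : r ≤ 1) (k : ℕ) :
    (1 - r) * (((k : ℝ) + 1) * r ^ k) ≤ 1 - r ^ (k + 1) := by
  have h1 := aux_k_le r hr0 hr1 k
  have h2 : (∑ i ∈ range (k + 1), r ^ i) * (r - 1) = r ^ (k + 1) - 1 := geom_sum_mul r (k + 1)
  have h3 : (1 - r) * (∑ i ∈ range (k + 1), r ^ i) = 1 - r ^ (k + 1) := by linear_combination -h2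
  nlinarith [mul_le_mul_of_nonneg_left h1 (by linarith : (0:ℝ) ≤ 1 - r)]

private lemma aux_fac (r : ℝ) (hr0 : 0 ≤ r) (hr1 : r < 1) (k : ℕ) :
    ((k : ℝ) + 1) * r ^ k ≤ 1 / (1 - r) := by
  rw [le_div_iff₀ (by linarith)]
  have := aux_geom r hr0 hr1.le k
  nlinarith [pow_nonneg hr0 (k + 1)]

private lemma sq_abs_pow (u : ℂ) (m j : ℕ) :
    (‖u‖ : ℂ) ^ (2 * m) * u ^ (j + 1)
      = u ^ (m + j + 1) * ((starRingEnd ℂ) u) ^ m := by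
  have hsq : ((‖u‖ : ℂ)) ^ 2 = u * (starRingEnd ℂ) u := by
    rw [Complex.mul_conj, ← Complex.sq_norm]; push_cast; ring
  calc (‖u‖ : ℂ) ^ (2 * m) * u ^ (j + 1)
      = (((‖u‖ : ℂ)) ^ 2) ^ m * u ^ (j + 1) := by rw [← pow_mul]
    _ = (u * (starRingEnd ℂ) u) ^ m * u ^ (j + 1) := by rw [hsq]
    _ = u ^ (m + j + 1) * ((starRingEnd ℂ) u) ^ m := by
        rw [mul_pow, pow_add, pow_add]; ring

private lemma term_diff_bound (z w : ℂ) (r : ℝ) (hz : ‖z‖ ≤ r)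
    (hw : ‖w‖ ≤ r) (m j : ℕ) :
    ‖(‖z‖ : ℂ) ^ (2 * m) * z ^ (j + 1)
        - (‖w‖ : ℂ) ^ (2 * m) * w ^ (j + 1)‖
      ≤ (2 * (m : ℝ) + j + 1) * r ^ (2 * m + j) * ‖z - w‖ := by
  have hr : 0 ≤ r := (norm_nonneg z).trans hz
  rw [sq_abs_pow z m j, sq_abs_pow w m j]
  have key : z ^ (m + j + 1) * ((starRingEnd ℂ) z) ^ m
        - w ^ (m + j + 1) * ((starRingEnd ℂ) w) ^ m
      = (z ^ (m + j + 1) - w ^ (m + j + 1)) * ((starRingEnd ℂ) z) ^ m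
        + w ^ (m + j + 1) * (((starRingEnd ℂ) z) ^ m - ((starRingEnd ℂ) w) ^ m) := by ring
  rw [key]
  refine (norm_add_le _ _).trans ?_
  rw [norm_mul, norm_mul]
  have hd : 0 ≤ ‖z - w‖ := norm_nonneg _
  have h1 : ‖z ^ (m + j + 1) - w ^ (m + j + 1)‖
      ≤ ((m : ℝ) + j + 1) * r ^ (m + j) * ‖z - w‖ := by
    have := abs_pow_sub_pow_le_aux z w r hz hw (m + j + 1)
    have e : (m + j + 1) - 1 = m + j := by omega
    rw [e] at this
    convert this using 2
    push_cast; ring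
  have h2 : ‖((starRingEnd ℂ) z) ^ m - ((starRingEnd ℂ) w) ^ m‖
      ≤ (m : ℝ) * r ^ (m - 1) * ‖z - w‖ := by
    have := abs_pow_sub_pow_le_aux ((starRingEnd ℂ) z) ((starRingEnd ℂ) w) r
      (by simpa using hz) (by simpa using hw) m
    simpa [← map_sub, Complex.norm_conj] using this
  have hcz : ‖((starRingEnd ℂ) z) ^ m‖ ≤ r ^ m := by
    rw [norm_pow, Complex.norm_conj]
    exact pow_le_pow_left₀ (norm_nonneg z) hz m
  have hwA : ‖w ^ (m + j + 1)‖ ≤ r ^ (m + j + 1) := by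
    rw [norm_pow]
    exact pow_le_pow_left₀ (norm_nonneg w) hw _
  have hp1 : ‖z ^ (m + j + 1) - w ^ (m + j + 1)‖ * ‖((starRingEnd ℂ) z) ^ m‖
      ≤ ((m : ℝ) + j + 1) * r ^ (2 * m + j) * ‖z - w‖ := by
    calc ‖z ^ (m + j + 1) - w ^ (m + j + 1)‖ * ‖((starRingEnd ℂ) z) ^ m‖
        ≤ (((m : ℝ) + j + 1) * r ^ (m + j) * ‖z - w‖) * r ^ m :=
          mul_le_mul h1 hcz (norm_nonneg _) (by positivity)
      _ = ((m : ℝ) + j + 1) * (r ^ (m + j) * r ^ m) * ‖z - w‖ := by ring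
      _ = ((m : ℝ) + j + 1) * r ^ (2 * m + j) * ‖z - w‖ := by
          rw [← pow_add, show m + j + m = 2 * m + j from by omega]
  have hp2 : ‖w ^ (m + j + 1)‖ * ‖((starRingEnd ℂ) z) ^ m - ((starRingEnd ℂ) w) ^ m‖
      ≤ (m : ℝ) * r ^ (2 * m + j) * ‖z - w‖ := by
    calc ‖w ^ (m + j + 1)‖ * ‖((starRingEnd ℂ) z) ^ m - ((starRingEnd ℂ) w) ^ m‖
        ≤ r ^ (m + j + 1) * ((m : ℝ) * r ^ (m - 1) * ‖z - w‖) :=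
          mul_le_mul hwA h2 (norm_nonneg _) (by positivity)
      _ ≤ (m : ℝ) * r ^ (2 * m + j) * ‖z - w‖ := by
          rcases Nat.eq_zero_or_pos m with hm | hm
          · simp [hm]
          · have e : r ^ (m + j + 1) * ((m : ℝ) * r ^ (m - 1) * ‖z - w‖)
                = (m : ℝ) * (r ^ (m + j + 1) * r ^ (m - 1)) * ‖z - w‖ := by ring
            rw [e, ← pow_add]
            have e2 : m + j + 1 + (m - 1) = 2 * m + j := by omega
            rw [e2]
  calc ‖z ^ (m + j + 1) - w ^ (m + j + 1)‖ * ‖((starRingEnd ℂ) z) ^ m‖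
        + ‖w ^ (m + j + 1)‖ * ‖((starRingEnd ℂ) z) ^ m - ((starRingEnd ℂ) w) ^ m‖
      ≤ ((m : ℝ) + j + 1) * r ^ (2 * m + j) * ‖z - w‖
        + (m : ℝ) * r ^ (2 * m + j) * ‖z - w‖ := add_le_add hp1 hp2
    _ = (2 * (m : ℝ) + j + 1) * r ^ (2 * m + j) * ‖z - w‖ := by ring

private lemma summable_kr (aa bb : ℕ → ℂ)
    (hc : Summable fun j : ℕ => ‖aa (j+1)‖ + ‖bb (j+1)‖)
    (r : ℝ) (hr0 : 0 ≤ r) (hr1 : r < 1) (m : ℕ) :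
    Summable fun j : ℕ => (‖aa (j+1)‖ + ‖bb (j+1)‖) *
      ((2 * (m : ℝ) + j + 1) * r ^ (2 * m + j)) := by
  have hc0 : ∀ j : ℕ, 0 ≤ ‖aa (j+1)‖ + ‖bb (j+1)‖ := fun j => by positivity
  refine Summable.of_nonneg_of_le (fun j => ?_) (fun j => ?_) (hc.mul_right (1 / (1 - r)))
  · have : 0 ≤ (2 * (m : ℝ) + j + 1) := by positivity
    exact mul_nonneg (hc0 j) (mul_nonneg this (pow_nonneg hr0 _))
  · refine mul_le_mul_of_nonneg_left ?_ (hc0 j)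
    have := aux_fac r hr0 hr1 (2 * m + j)
    calc (2 * (m : ℝ) + j + 1) * r ^ (2 * m + j)
        = ((2 * m + j : ℕ) + 1 : ℝ) * r ^ (2 * m + j) := by push_cast; ring
      _ ≤ 1 / (1 - r) := this

private lemma conj_term (u : ℂ) (m j : ℕ) :
    (‖u‖ : ℂ) ^ (2 * m) * ((starRingEnd ℂ) u) ^ (j + 1)
      = (starRingEnd ℂ) ((‖u‖ : ℂ) ^ (2 * m) * u ^ (j + 1)) := by
  simp [map_mul, map_pow, Complex.conj_ofReal]

private lemma inner_diff_est (aa bb : ℕ → ℂ) (m : ℕ) (z w : ℂ) (r : ℝ)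
    (hz : ‖z‖ ≤ r) (hw : ‖w‖ ≤ r) (hr1 : r < 1)
    (hc : Summable fun j : ℕ => ‖aa (j+1)‖ + ‖bb (j+1)‖)
    (hsz : Summable fun j : ℕ => aa (j+1) * z^(j+1) + (starRingEnd ℂ) (bb (j+1)) * ((starRingEnd ℂ) z)^(j+1))
    (hsw : Summable fun j : ℕ => aa (j+1) * w^(j+1) + (starRingEnd ℂ) (bb (j+1)) * ((starRingEnd ℂ) w)^(j+1)) :
    ‖(‖z‖ : ℂ)^(2*m) * ∑' j : ℕ, (aa (j+1) * z^(j+1) + (starRingEnd ℂ) (bb (j+1)) * ((starRingEnd ℂ) z)^(j+1))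
      - (‖w‖ : ℂ)^(2*m) * ∑' j : ℕ, (aa (j+1) * w^(j+1) + (starRingEnd ℂ) (bb (j+1)) * ((starRingEnd ℂ) w)^(j+1))‖
      ≤ (∑' j : ℕ, (‖aa (j+1)‖ + ‖bb (j+1)‖) * ((2 * (m : ℝ) + j + 1) * r ^ (2 * m + j)))
        * ‖z - w‖ := by
  have hr0 : 0 ≤ r := (norm_nonneg z).trans hz
  set g : ℂ → ℕ → ℂ := fun u j => (‖u‖ : ℂ)^(2*m) *
    (aa (j+1) * u^(j+1) + (starRingEnd ℂ) (bb (j+1)) * ((starRingEnd ℂ) u)^(j+1)) with hg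
  have hgz : Summable (g z) := hsz.mul_left _
  have hgw : Summable (g w) := hsw.mul_left _
  have e1 : (‖z‖ : ℂ)^(2*m) * ∑' j : ℕ, (aa (j+1) * z^(j+1) + (starRingEnd ℂ) (bb (j+1)) * ((starRingEnd ℂ) z)^(j+1))
      - (‖w‖ : ℂ)^(2*m) * ∑' j : ℕ, (aa (j+1) * w^(j+1) + (starRingEnd ℂ) (bb (j+1)) * ((starRingEnd ℂ) w)^(j+1))
      = ∑' j : ℕ, (g z j - g w j) := by
    rw [Summable.tsum_sub hgz hgw, hg]
    simp only [tsum_mul_left]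
  rw [e1]
  have hterm : ∀ j : ℕ, ‖g z j - g w j‖
      ≤ ((‖aa (j+1)‖ + ‖bb (j+1)‖) * ((2 * (m : ℝ) + j + 1) * r ^ (2 * m + j))) * ‖z - w‖ := by
    intro j
    have e2 : g z j - g w j
        = aa (j+1) * ((‖z‖ : ℂ)^(2*m) * z^(j+1) - (‖w‖ : ℂ)^(2*m) * w^(j+1))
          + (starRingEnd ℂ) (bb (j+1)) * (starRingEnd ℂ)
            ((‖z‖ : ℂ)^(2*m) * z^(j+1) - (‖w‖ : ℂ)^(2*m) * w^(j+1)) := by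
      rw [hg]
      simp only [map_sub]
      rw [← conj_term z m j, ← conj_term w m j]
      ring
    rw [e2]
    refine (norm_add_le _ _).trans ?_
    rw [norm_mul, norm_mul, Complex.norm_conj, Complex.norm_conj]
    have hX := term_diff_bound z w r hz hw m j
    have := add_le_add
      (mul_le_mul_of_nonneg_left hX (norm_nonneg (aa (j+1))))
      (mul_le_mul_of_nonneg_left hX (norm_nonneg (bb (j+1))))
    calc ‖aa (j+1)‖ * ‖(‖z‖ : ℂ)^(2*m) * z^(j+1) - (‖w‖ : ℂ)^(2*m) * w^(j+1)‖
          + ‖bb (j+1)‖ * ‖(‖z‖ : ℂ)^(2*m) * z^(j+1) - (‖w‖ : ℂ)^(2*m) * w^(j+1)‖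
        ≤ ‖aa (j+1)‖ * ((2 * (m : ℝ) + j + 1) * r ^ (2 * m + j) * ‖z - w‖)
          + ‖bb (j+1)‖ * ((2 * (m : ℝ) + j + 1) * r ^ (2 * m + j) * ‖z - w‖) := this
      _ = ((‖aa (j+1)‖ + ‖bb (j+1)‖) * ((2 * (m : ℝ) + j + 1) * r ^ (2 * m + j))) * ‖z - w‖ := by ring
  have hbsum : Summable fun j : ℕ =>
      ((‖aa (j+1)‖ + ‖bb (j+1)‖) * ((2 * (m : ℝ) + j + 1) * r ^ (2 * m + j))) * ‖z - w‖ :=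
    (summable_kr aa bb hc r hr0 hr1 m).mul_right _
  have habs : Summable fun j : ℕ => ‖g z j - g w j‖ :=
    Summable.of_nonneg_of_le (fun j => norm_nonneg _) hterm hbsum
  calc ‖∑' j : ℕ, (g z j - g w j)‖
      ≤ ∑' j : ℕ, ‖g z j - g w j‖ := by
        have habs' : Summable fun j : ℕ => ‖g z j - g w j‖ := by
          exact habs
        have h := norm_tsum_le_tsum_norm habs'
        exact h
    _ ≤ ∑' j : ℕ, ((‖aa (j+1)‖ + ‖bb (j+1)‖) * ((2 * (m : ℝ) + j + 1) * r ^ (2 * m + j))) * ‖z - w‖ :=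
        Summable.tsum_le_tsum hterm habs hbsum
    _ = (∑' j : ℕ, (‖aa (j+1)‖ + ‖bb (j+1)‖) * ((2 * (m : ℝ) + j + 1) * r ^ (2 * m + j))) * ‖z - w‖ :=
        tsum_mul_right

private lemma summable_rho (aa bb : ℕ → ℂ)
    (hc : Summable fun j : ℕ => ‖aa (j+1)‖ + ‖bb (j+1)‖)
    (ρ : ℝ) (hρ0 : 0 ≤ ρ) (hρ1 : ρ ≤ 1) (m : ℕ) :
    Summable fun j : ℕ => (‖aa (j+1)‖ + ‖bb (j+1)‖) * ρ ^ (2 * m + j + 1) := by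
  refine Summable.of_nonneg_of_le (fun j => by positivity) (fun j => ?_) hc
  have h1 : ρ ^ (2 * m + j + 1) ≤ 1 := pow_le_one₀ hρ0 hρ1
  nlinarith [norm_nonneg (aa (j+1)), norm_nonneg (bb (j+1)),
    pow_nonneg hρ0 (2 * m + j + 1)]

private lemma inner_abs_est (aa bb : ℕ → ℂ) (m : ℕ) (u : ℂ) (hu : ‖u‖ ≤ 1)
    (hc : Summable fun j : ℕ => ‖aa (j+1)‖ + ‖bb (j+1)‖)
    (hsu : Summable fun j : ℕ => aa (j+1) * u^(j+1) + (starRingEnd ℂ) (bb (j+1)) * ((starRingEnd ℂ) u)^(j+1)) :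
    ‖(‖u‖ : ℂ)^(2*m) * ∑' j : ℕ, (aa (j+1) * u^(j+1) + (starRingEnd ℂ) (bb (j+1)) * ((starRingEnd ℂ) u)^(j+1))‖
      ≤ ∑' j : ℕ, (‖aa (j+1)‖ + ‖bb (j+1)‖) * (‖u‖) ^ (2 * m + j + 1) := by
  have hρ0 : 0 ≤ ‖u‖ := norm_nonneg u
  set g : ℕ → ℂ := fun j => (‖u‖ : ℂ)^(2*m) *
    (aa (j+1) * u^(j+1) + (starRingEnd ℂ) (bb (j+1)) * ((starRingEnd ℂ) u)^(j+1)) with hg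
  have hgu : Summable g := hsu.mul_left _
  have e1 : (‖u‖ : ℂ)^(2*m) * ∑' j : ℕ, (aa (j+1) * u^(j+1) + (starRingEnd ℂ) (bb (j+1)) * ((starRingEnd ℂ) u)^(j+1))
      = ∑' j : ℕ, g j := by rw [hg]; simp only [tsum_mul_left]
  rw [e1]
  have hterm : ∀ j : ℕ, ‖g j‖
      ≤ (‖aa (j+1)‖ + ‖bb (j+1)‖) * (‖u‖) ^ (2 * m + j + 1) := by
    intro j
    rw [hg]
    simp only
    rw [norm_mul]
    have h1 : ‖(‖u‖ : ℂ)^(2*m)‖ = (‖u‖) ^ (2*m) := by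
      rw [norm_pow, Complex.norm_of_nonneg hρ0]
    rw [h1]
    have h2 : ‖aa (j+1) * u^(j+1) + (starRingEnd ℂ) (bb (j+1)) * ((starRingEnd ℂ) u)^(j+1)‖
        ≤ (‖aa (j+1)‖ + ‖bb (j+1)‖) * (‖u‖) ^ (j+1) := by
      refine (norm_add_le _ _).trans ?_
      rw [norm_mul, norm_mul, norm_pow, norm_pow, Complex.norm_conj, Complex.norm_conj]
      ring_nf
      exact le_refl _
    calc (‖u‖) ^ (2*m) * ‖aa (j+1) * u^(j+1) + (starRingEnd ℂ) (bb (j+1)) * ((starRingEnd ℂ) u)^(j+1)‖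
        ≤ (‖u‖) ^ (2*m) * ((‖aa (j+1)‖ + ‖bb (j+1)‖) * (‖u‖) ^ (j+1)) :=
          mul_le_mul_of_nonneg_left h2 (by positivity)
      _ = (‖aa (j+1)‖ + ‖bb (j+1)‖) * ((‖u‖) ^ (2*m) * (‖u‖) ^ (j+1)) := by ring
      _ = (‖aa (j+1)‖ + ‖bb (j+1)‖) * (‖u‖) ^ (2 * m + j + 1) := by
          rw [← pow_add, show 2 * m + (j + 1) = 2 * m + j + 1 from by omega]
  have hbsum := summable_rho aa bb hc (‖u‖) hρ0 hu m
  have habs : Summable fun j : ℕ => ‖g j‖ :=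
    Summable.of_nonneg_of_le (fun j => norm_nonneg _) hterm hbsum
  calc ‖∑' j : ℕ, g j‖
      ≤ ∑' j : ℕ, ‖g j‖ := by
        have habs' : Summable fun j : ℕ => ‖g j‖ := by exact habs
        have h := norm_tsum_le_tsum_norm habs'
        exact h
    _ ≤ ∑' j : ℕ, (‖aa (j+1)‖ + ‖bb (j+1)‖) * (‖u‖) ^ (2 * m + j + 1) :=
        Summable.tsum_le_tsum hterm habs hbsum

theorem distance_ratio_contraction (p : ℕ) (hp : 1 ≤ p)
    (a b : ℕ → ℕ → ℂ) (F : ℂ → ℂ) (M : ℝ) (hM : 0 < M)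
    (hsum : ∀ z ∈ Metric.ball (0:ℂ) 1, ∀ n,
      Summable (fun j : ℕ =>
        a n (j+1) * z^(j+1) + (starRingEnd ℂ) (b n (j+1)) * ((starRingEnd ℂ) z)^(j+1)))
    (hF : ∀ z ∈ Metric.ball (0:ℂ) 1,
      F z = ∑ n ∈ Finset.Icc 1 p, (‖z‖ : ℂ)^(2*(n-1)) *
        ∑' j : ℕ, (a n (j+1) * z^(j+1) +
          (starRingEnd ℂ) (b n (j+1)) * ((starRingEnd ℂ) z)^(j+1)))
    (hcs : ∀ n, Summable (fun j : ℕ => ‖a n (j+1)‖ + ‖b n (j+1)‖))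
    (hcoef : ∑ n ∈ Finset.Icc 1 p,
        ∑' j : ℕ, (‖a n (j+1)‖ + ‖b n (j+1)‖) ≤ M)
    (hFD : Set.MapsTo F (Metric.ball (0:ℂ) 1) (Metric.ball (0:ℂ) M)) :
    ∀ z ∈ Metric.ball (0:ℂ) 1, ∀ w ∈ Metric.ball (0:ℂ) 1,
      jBall M (F z) (F w) ≤ jBall 1 z w := by
  intro z hz w hw
  have hz1 : ‖z‖ < 1 := by
    simpa using mem_ball_zero_iff.mp hz
  have hw1 : ‖w‖ < 1 := by
    simpa using mem_ball_zero_iff.mp hw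
  set r : ℝ := max (‖z‖) (‖w‖) with hrdef
  have hr0 : 0 ≤ r := le_trans (norm_nonneg z) (le_max_left _ _)
  have hr1 : r < 1 := max_lt hz1 hw1
  have hzr : ‖z‖ ≤ r := le_max_left _ _
  have hwr : ‖w‖ ≤ r := le_max_right _ _
  set S : ℝ := ∑ n ∈ Finset.Icc 1 p, ∑' j : ℕ,
      (‖a n (j+1)‖ + ‖b n (j+1)‖) *
        ((2 * ((n - 1 : ℕ) : ℝ) + j + 1) * r ^ (2 * (n - 1) + j)) with hSdef
  -- upper bound on the difference
  have hdiff : ‖F z - F w‖ ≤ S * ‖z - w‖ := by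
    rw [hF z hz, hF w hw, ← Finset.sum_sub_distrib]
    refine (norm_sum_le _ _).trans ?_
    rw [hSdef, Finset.sum_mul]
    refine Finset.sum_le_sum fun n _ => ?_
    exact inner_diff_est (a n) (b n) (n - 1) z w r hzr hwr hr1 (hcs n) (hsum z hz n) (hsum w hw n)
  -- lower bound on M - |F u|
  have hlow : ∀ u, u ∈ Metric.ball (0:ℂ) 1 → ‖u‖ ≤ r →
      (1 - r) * S ≤ M - ‖F u‖ := by
    intro u hu hur
    have hu1 : ‖u‖ < 1 := by
      simpa using mem_ball_zero_iff.mp hu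
    have hFu : ‖F u‖ ≤ ∑ n ∈ Finset.Icc 1 p, ∑' j : ℕ,
        (‖a n (j+1)‖ + ‖b n (j+1)‖) * (‖u‖) ^ (2 * (n - 1) + j + 1) := by
      rw [hF u hu]
      refine (norm_sum_le _ _).trans (Finset.sum_le_sum fun n _ => ?_)
      exact inner_abs_est (a n) (b n) (n - 1) u hu1.le (hcs n) (hsum u hu n)
    have key : (1 - r) * S + ∑ n ∈ Finset.Icc 1 p, ∑' j : ℕ,
        (‖a n (j+1)‖ + ‖b n (j+1)‖) * (‖u‖) ^ (2 * (n - 1) + j + 1)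
        ≤ ∑ n ∈ Finset.Icc 1 p, ∑' j : ℕ, (‖a n (j+1)‖ + ‖b n (j+1)‖) := by
      rw [hSdef, Finset.mul_sum, ← Finset.sum_add_distrib]
      refine Finset.sum_le_sum fun n _ => ?_
      have hsum1 : Summable (fun j : ℕ => (1 - r) *
          ((‖a n (j+1)‖ + ‖b n (j+1)‖) *
            ((2 * ((n - 1 : ℕ) : ℝ) + j + 1) * r ^ (2 * (n - 1) + j)))) :=
        (summable_kr (a n) (b n) (hcs n) r hr0 hr1 (n - 1)).mul_left _
      have hsum2 := summable_rho (a n) (b n) (hcs n) (‖u‖) (norm_nonneg u) hu1.le (n - 1)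
      rw [← tsum_mul_left, ← Summable.tsum_add hsum1 hsum2]
      refine Summable.tsum_le_tsum (fun j => ?_) (hsum1.add hsum2) (hcs n)
      have hc0 : 0 ≤ ‖a n (j+1)‖ + ‖b n (j+1)‖ := by positivity
      have hgeom := aux_geom r hr0 hr1.le (2 * (n - 1) + j)
      push_cast at hgeom
      have hmono : (‖u‖) ^ (2 * (n - 1) + j + 1) ≤ r ^ (2 * (n - 1) + j + 1) :=
        pow_le_pow_left₀ (norm_nonneg u) hur _
      have h3 : (1 - r) * ((2 * ((n - 1 : ℕ) : ℝ) + j + 1) * r ^ (2 * (n - 1) + j))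
          + (‖u‖) ^ (2 * (n - 1) + j + 1) ≤ 1 := by linarith
      nlinarith [mul_le_mul_of_nonneg_left h3 hc0]
    linarith
  -- endgame
  have hFzM : ‖F z‖ < M := by
    simpa using mem_ball_zero_iff.mp (hFD hz)
  have hFwM : ‖F w‖ < M := by
    simpa using mem_ball_zero_iff.mp (hFD hw)
  have hmF0 : 0 < min (M - ‖F z‖) (M - ‖F w‖) :=
    lt_min (by linarith) (by linarith)
  have hmFS : (1 - r) * S ≤ min (M - ‖F z‖) (M - ‖F w‖) :=
    le_min (hlow z hz hzr) (hlow w hw hwr)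
  have hm0 : min (1 - ‖z‖) (1 - ‖w‖) = 1 - r := by
    rw [hrdef]
    rcases le_total (‖z‖) (‖w‖) with h | h
    · rw [max_eq_right h, min_eq_right (by linarith)]
    · rw [max_eq_left h, min_eq_left (by linarith)]
  have h1r : 0 < 1 - r := by linarith
  unfold jBall
  rw [hm0]
  have hratio : dist (F z) (F w) / min (M - ‖F z‖) (M - ‖F w‖)
      ≤ dist z w / (1 - r) := by
    rw [div_le_div_iff₀ hmF0 h1r]
    calc dist (F z) (F w) * (1 - r)
        ≤ (S * ‖z - w‖) * (1 - r) := by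
          rw [Complex.dist_eq]
          exact mul_le_mul_of_nonneg_right hdiff h1r.le
      _ = ‖z - w‖ * ((1 - r) * S) := by ring
      _ ≤ ‖z - w‖ * min (M - ‖F z‖) (M - ‖F w‖) :=
          mul_le_mul_of_nonneg_left hmFS (norm_nonneg _)
      _ = dist z w * min (M - ‖F z‖) (M - ‖F w‖) := by
          rw [Complex.dist_eq]
  have hpos : (0:ℝ) < 1 + dist (F z) (F w) / min (M - ‖F z‖) (M - ‖F w‖) := by
    have : 0 ≤ dist (F z) (F w) / min (M - ‖F z‖) (M - ‖F w‖) :=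
      div_nonneg dist_nonneg hmF0.le
    linarith
  refine Real.log_le_log hpos ?_
  linarith
end

section
/- Lower bound on distance to boundary: for F(z) = Σ_{n=1}^p |z|^{2(n-1)} Σ_j (a_{n,j}z^j + conj(b_{n,j})conj(z)^j) with Σ_{n,j}(|a_{n,j}|+|b_{n,j}|) ≤ M, one has M − |F(z)| ≥ (1 − |z|) · Σ_{n=1}^p Σ_{j=1}^∞ (|a_{n,j}|+|b_{n,j}|) Σ_{i=0}^{2n+j−3} |z|^i for all z in the unit disk. -/
set_option maxHeartbeats 1000000


open Finset

theorem boundary_distance_lower_bound (p : ℕ) (hp : 1 ≤ p)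
    (a b : ℕ → ℕ → ℂ) (F : ℂ → ℂ) (M : ℝ) (hM : 0 < M)
    (hsum : ∀ z ∈ Metric.ball (0:ℂ) 1, ∀ n,
      Summable (fun j : ℕ =>
        a n (j+1) * z^(j+1) + (starRingEnd ℂ) (b n (j+1)) * ((starRingEnd ℂ) z)^(j+1)))
    (hF : ∀ z ∈ Metric.ball (0:ℂ) 1,
      F z = ∑ n ∈ Finset.Icc 1 p, (‖z‖ : ℂ)^(2*(n-1)) *
        ∑' j : ℕ, (a n (j+1) * z^(j+1) +
          (starRingEnd ℂ) (b n (j+1)) * ((starRingEnd ℂ) z)^(j+1)))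
    (hcs : ∀ n, Summable (fun j : ℕ => ‖a n (j+1)‖ + ‖b n (j+1)‖))
    (hcoef : ∑ n ∈ Finset.Icc 1 p,
        ∑' j : ℕ, (‖a n (j+1)‖ + ‖b n (j+1)‖) ≤ M) :
    ∀ z ∈ Metric.ball (0:ℂ) 1,
      (1 - ‖z‖) *
          ∑ n ∈ Finset.Icc 1 p, ∑' j : ℕ,
            (‖a n (j+1)‖ + ‖b n (j+1)‖) *
              ∑ i ∈ Finset.range (2*n + j - 1), (‖z‖)^i ≤
        M - ‖F z‖ := by
  intro z hz
  set r := ‖z‖ with hrdef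
  have hr0 : 0 ≤ r := norm_nonneg z
  have hr1 : r < 1 := by
    simpa [hrdef, Complex.dist_eq] using Metric.mem_ball.mp hz
  set c : ℕ → ℕ → ℝ := fun n j => ‖a n (j+1)‖ + ‖b n (j+1)‖ with hcdef
  have hc0 : ∀ n j, 0 ≤ c n j := fun n j => by positivity
  have hrpow1 : ∀ k : ℕ, r ^ k ≤ 1 := fun k => pow_le_one₀ hr0 hr1.le
  have hrpow0 : ∀ k : ℕ, 0 ≤ r ^ k := fun k => pow_nonneg hr0 k
  -- summability of c * r^k
  have hS1 : ∀ n, Summable (fun j : ℕ => c n j * r ^ (2*n + j - 1)) := by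
    intro n
    apply Summable.of_nonneg_of_le (fun j => by positivity)
      (fun j => ?_) (hcs n)
    calc c n j * r ^ (2*n + j - 1) ≤ c n j * 1 :=
          mul_le_mul_of_nonneg_left (hrpow1 _) (hc0 n j)
      _ = c n j := mul_one _
  have hS2 : ∀ n, Summable (fun j : ℕ => c n j * r ^ (j+1)) := by
    intro n
    apply Summable.of_nonneg_of_le (fun j => by positivity)
      (fun j => ?_) (hcs n)
    calc c n j * r ^ (j+1) ≤ c n j * 1 :=
          mul_le_mul_of_nonneg_left (hrpow1 _) (hc0 n j)
      _ = c n j := mul_one _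
  -- norm bound on summands
  have hterm : ∀ n j, ‖a n (j+1) * z^(j+1) +
      (starRingEnd ℂ) (b n (j+1)) * ((starRingEnd ℂ) z)^(j+1)‖ ≤ c n j * r ^ (j+1) := by
    intro n j
    calc ‖a n (j+1) * z^(j+1) +
          (starRingEnd ℂ) (b n (j+1)) * ((starRingEnd ℂ) z)^(j+1)‖
        ≤ ‖a n (j+1) * z^(j+1)‖ +
          ‖(starRingEnd ℂ) (b n (j+1)) * ((starRingEnd ℂ) z)^(j+1)‖ :=
          norm_add_le _ _
      _ = c n j * r ^ (j+1) := by
          simp [hcdef, norm_mul, norm_pow, Complex.norm_conj, hrdef]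
          ring
  have hnormsum : ∀ n, Summable (fun j : ℕ => ‖a n (j+1) * z^(j+1) +
      (starRingEnd ℂ) (b n (j+1)) * ((starRingEnd ℂ) z)^(j+1)‖) := by
    intro n
    exact Summable.of_nonneg_of_le (fun j => norm_nonneg _) (hterm n) (hS2 n)
  -- bound on |F z|
  have hFbound : ‖F z‖ ≤ ∑ n ∈ Finset.Icc 1 p, ∑' j : ℕ, c n j * r ^ (2*n + j - 1) := by
    rw [hF z hz]
    calc ‖∑ n ∈ Finset.Icc 1 p, (‖z‖ : ℂ)^(2*(n-1)) *
          ∑' j : ℕ, (a n (j+1) * z^(j+1) +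
            (starRingEnd ℂ) (b n (j+1)) * ((starRingEnd ℂ) z)^(j+1))‖
        ≤ ∑ n ∈ Finset.Icc 1 p, ‖(‖z‖ : ℂ)^(2*(n-1)) *
          ∑' j : ℕ, (a n (j+1) * z^(j+1) +
            (starRingEnd ℂ) (b n (j+1)) * ((starRingEnd ℂ) z)^(j+1))‖ :=
          norm_sum_le _ _
      _ ≤ ∑ n ∈ Finset.Icc 1 p, ∑' j : ℕ, c n j * r ^ (2*n + j - 1) := by
          apply Finset.sum_le_sum
          intro n hn
          have hn1 : 1 ≤ n := (Finset.mem_Icc.mp hn).1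
          rw [norm_mul, norm_pow]
          have habs_r : ‖(‖z‖ : ℂ)‖ = r := by
            simp [hrdef]
          rw [habs_r]
          have h1 : ‖∑' j : ℕ, (a n (j+1) * z^(j+1) +
              (starRingEnd ℂ) (b n (j+1)) * ((starRingEnd ℂ) z)^(j+1))‖ ≤
              ∑' j : ℕ, c n j * r ^ (j+1) := by
            calc ‖∑' j : ℕ, (a n (j+1) * z^(j+1) +
                (starRingEnd ℂ) (b n (j+1)) * ((starRingEnd ℂ) z)^(j+1))‖
                ≤ ∑' j : ℕ, ‖a n (j+1) * z^(j+1) +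
                  (starRingEnd ℂ) (b n (j+1)) * ((starRingEnd ℂ) z)^(j+1)‖ := by
                  exact norm_tsum_le_tsum_norm (hnormsum n)
              _ ≤ ∑' j : ℕ, c n j * r ^ (j+1) :=
                  Summable.tsum_le_tsum (hterm n) (hnormsum n) (hS2 n)
          calc r ^ (2*(n-1)) * ‖∑' j : ℕ, (a n (j+1) * z^(j+1) +
                (starRingEnd ℂ) (b n (j+1)) * ((starRingEnd ℂ) z)^(j+1))‖
              ≤ r ^ (2*(n-1)) * ∑' j : ℕ, c n j * r ^ (j+1) :=
                mul_le_mul_of_nonneg_left h1 (hrpow0 _)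
            _ = ∑' j : ℕ, c n j * r ^ (2*n + j - 1) := by
                rw [← tsum_mul_left]
                congr 1
                funext j
                have he : 2*(n-1) + (j+1) = 2*n + j - 1 := by omega
                rw [← he, pow_add]
                ring
  -- rewrite the LHS
  have hgeom : ∀ k : ℕ, (1 - r) * ∑ i ∈ Finset.range k, r^i = 1 - r^k := by
    intro k
    have h := geom_sum_mul r k
    linear_combination (-1 : ℝ) * h
  have hLHS : (1 - r) * ∑ n ∈ Finset.Icc 1 p, ∑' j : ℕ,
      c n j * ∑ i ∈ Finset.range (2*n + j - 1), r^i =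
      (∑ n ∈ Finset.Icc 1 p, ∑' j : ℕ, c n j) -
      ∑ n ∈ Finset.Icc 1 p, ∑' j : ℕ, c n j * r ^ (2*n + j - 1) := by
    rw [Finset.mul_sum, ← Finset.sum_sub_distrib]
    apply Finset.sum_congr rfl
    intro n hn
    rw [← tsum_mul_left, ← Summable.tsum_sub (hcs n) (hS1 n)]
    congr 1
    funext j
    have := hgeom (2*n + j - 1)
    calc (1 - r) * (c n j * ∑ i ∈ Finset.range (2*n + j - 1), r^i)
        = c n j * ((1 - r) * ∑ i ∈ Finset.range (2*n + j - 1), r^i) := by ring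
      _ = c n j * (1 - r ^ (2*n + j - 1)) := by rw [this]
      _ = c n j - c n j * r ^ (2*n + j - 1) := by ring
  rw [show (∑ n ∈ Finset.Icc 1 p, ∑' j : ℕ,
      (‖a n (j+1)‖ + ‖b n (j+1)‖) *
        ∑ i ∈ Finset.range (2*n + j - 1), (‖z‖)^i) =
      ∑ n ∈ Finset.Icc 1 p, ∑' j : ℕ,
      c n j * ∑ i ∈ Finset.range (2*n + j - 1), r^i from rfl]
  rw [hLHS]
  linarith [hFbound, hcoef]
end
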